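/- (Post-processing inequality) Suppose finite random variables X, Y, Z form a Markov chain X − Y − Z. Then for all z ∈ supp(P_Z), ℓ(X→z) ≤ max_{y ∈ supp(P_Y)} ℓ(X→y). -/
import Mathlib


/-- Post-processing: if X − Y − Z is a Markov chain, then
ℓ(X→z) ≤ max_{y ∈ supp(P_Y)} ℓ(X→y). -/
theorem stmt_5 {α β γ : Type*} [Fintype α] [Fintype β] [Fintype γ]
    (p : α → β → γ → ℝ)
    (hp : ∀ x y z, 0 ≤ p x y z)
    (hsum : ∑ x, ∑ y, ∑ z, p x y z = 1)
    (pX : α → ℝ) (hpX : ∀ x, pX x = ∑ y, ∑ z, p x y z)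
    (pY : β → ℝ) (hpY : ∀ y, pY y = ∑ x, ∑ z, p x y z)
    (pZ : γ → ℝ) (hpZ : ∀ z, pZ z = ∑ x, ∑ y, p x y z)
    (pXY : α → β → ℝ) (hpXY : ∀ x y, pXY x y = ∑ z, p x y z)
    (pXZ : α → γ → ℝ) (hpXZ : ∀ x z, pXZ x z = ∑ y, p x y z)
    (pYZ : β → γ → ℝ) (hpYZ : ∀ y z, pYZ y z = ∑ x, p x y z)
    (hmarkov : ∀ x y z, p x y z * pY y = pXY x y * pYZ y z)
    (sX : Finset α) (hsX : ∀ x, x ∈ sX ↔ 0 < pX x) (hneX : sX.Nonempty)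
    (sY : Finset β) (hsY : ∀ y, y ∈ sY ↔ 0 < pY y) (hneY : sY.Nonempty)
    (z : γ) (hz : 0 < pZ z) :
    Real.log (sX.sup' hneX fun x => pXZ x z / (pX x * pZ z)) ≤
      sY.sup' hneY fun y =>
        Real.log (sX.sup' hneX fun x => pXY x y / (pX x * pY y)) := by
  set S := sY.sup' hneY fun y => sX.sup' hneX fun x => pXY x y / (pX x * pY y) with hS
  have hpXYnn : ∀ x y, 0 ≤ pXY x y := fun x y => by
    rw [hpXY]; exact Finset.sum_nonneg fun _ _ => hp _ _ _
  have hpYZnn : ∀ y z', 0 ≤ pYZ y z' := fun y z' => by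
    rw [hpYZ]; exact Finset.sum_nonneg fun _ _ => hp _ _ _
  have hpXZnn : ∀ x z', 0 ≤ pXZ x z' := fun x z' => by
    rw [hpXZ]; exact Finset.sum_nonneg fun _ _ => hp _ _ _
  have hpYnn : ∀ y, 0 ≤ pY y := fun y => by
    rw [hpY]; exact Finset.sum_nonneg fun _ _ => Finset.sum_nonneg fun _ _ => hp _ _ _
  have hpY' : ∀ y, pY y = ∑ x, pXY x y := fun y => by
    rw [hpY]; simp_rw [hpXY]
  have hpX' : ∀ x, pX x = ∑ y, pXY x y := fun x => by
    rw [hpX]; simp_rw [hpXY]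
  have hpX'' : ∀ x, pX x = ∑ z', pXZ x z' := fun x => by
    rw [hpX]; simp_rw [hpXZ]; rw [Finset.sum_comm]
  have hpZ' : ∀ z', pZ z' = ∑ y, pYZ y z' := fun z' => by
    rw [hpZ]; simp_rw [hpYZ]; rw [Finset.sum_comm]
  have hpZ'' : ∀ z', pZ z' = ∑ x, pXZ x z' := fun z' => by
    rw [hpZ]; simp_rw [hpXZ]
  have hXYleX : ∀ x y, pXY x y ≤ pX x := fun x y => by
    rw [hpX' x]
    exact Finset.single_le_sum (f := fun y => pXY x y) (fun _ _ => hpXYnn _ _) (Finset.mem_univ y)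
  have hXZleX : ∀ x z', pXZ x z' ≤ pX x := fun x z' => by
    rw [hpX'' x]
    exact Finset.single_le_sum (f := fun z' => pXZ x z') (fun _ _ => hpXZnn _ _) (Finset.mem_univ z')
  have hpleY : ∀ x y z', p x y z' ≤ pY y := fun x y z' => by
    rw [hpY y]
    calc p x y z' ≤ ∑ z'', p x y z'' :=
          Finset.single_le_sum (f := fun z'' => p x y z'') (fun _ _ => hp _ _ _)
            (Finset.mem_univ z')
    _ ≤ ∑ x', ∑ z'', p x' y z'' :=
          Finset.single_le_sum (f := fun x' => ∑ z'', p x' y z'')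
            (fun _ _ => Finset.sum_nonneg fun _ _ => hp _ _ _) (Finset.mem_univ x)
  -- S is positive
  have hSpos : 0 < S := by
    obtain ⟨y0, hy0⟩ := hneY
    have hpY0 : 0 < pY y0 := (hsY y0).1 hy0
    have : ∃ x0, 0 < pXY x0 y0 := by
      by_contra h
      push_neg at h
      have : pY y0 ≤ 0 := by
        rw [hpY' y0]; exact Finset.sum_nonpos fun x _ => h x
      linarith
    obtain ⟨x0, hx0⟩ := this
    have hpX0 : 0 < pX x0 := lt_of_lt_of_le hx0 (hXYleX x0 y0)
    have hx0mem : x0 ∈ sX := (hsX x0).2 hpX0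
    have h1 : pXY x0 y0 / (pX x0 * pY y0) ≤ S :=
      le_trans (Finset.le_sup' (fun x => pXY x y0 / (pX x * pY y0)) hx0mem)
        (Finset.le_sup' (fun y => sX.sup' hneX fun x => pXY x y / (pX x * pY y)) hy0)
    have : 0 < pXY x0 y0 / (pX x0 * pY y0) := by positivity
    linarith
  -- key inequality
  have hkey : ∀ x ∈ sX, pXZ x z / (pX x * pZ z) ≤ S := by
    intro x hx
    have hpXx : 0 < pX x := (hsX x).1 hx
    rw [div_le_iff₀ (by positivity)]
    have hterm : ∀ y, p x y z ≤ S * pX x * pYZ y z := by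
      intro y
      rcases (hpYnn y).eq_or_lt with hY0 | hYpos
      · have h0 : p x y z = 0 := le_antisymm (by linarith [hpleY x y z]) (hp x y z)
        rw [h0]
        exact mul_nonneg (mul_nonneg hSpos.le hpXx.le) (hpYZnn y z)
      · have hymem : y ∈ sY := (hsY y).2 hYpos
        have h1 : pXY x y / (pX x * pY y) ≤ S :=
          le_trans (Finset.le_sup' (fun x' => pXY x' y / (pX x' * pY y)) hx)
            (Finset.le_sup' (fun y' => sX.sup' hneX fun x' => pXY x' y' / (pX x' * pY y')) hymem)
        have h2 : pXY x y ≤ S * (pX x * pY y) := by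
          rw [div_le_iff₀ (by positivity)] at h1; linarith
        have h3 : p x y z * pY y = pXY x y * pYZ y z := hmarkov x y z
        have h4 : pXY x y * pYZ y z ≤ S * (pX x * pY y) * pYZ y z :=
          mul_le_mul_of_nonneg_right h2 (hpYZnn y z)
        have h5 : p x y z * pY y ≤ (S * pX x * pYZ y z) * pY y := by
          rw [h3]; nlinarith
        exact le_of_mul_le_mul_right h5 hYpos
    calc pXZ x z = ∑ y, p x y z := hpXZ x z
    _ ≤ ∑ y, S * pX x * pYZ y z := Finset.sum_le_sum fun y _ => hterm y
    _ = S * pX x * ∑ y, pYZ y z := by rw [Finset.mul_sum]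
    _ = S * (pX x * pZ z) := by rw [← hpZ' z]; ring
  have hale : (sX.sup' hneX fun x => pXZ x z / (pX x * pZ z)) ≤ S :=
    Finset.sup'_le hneX _ hkey
  have hapos : 0 < sX.sup' hneX fun x => pXZ x z / (pX x * pZ z) := by
    have : ∃ x1, 0 < pXZ x1 z := by
      by_contra h
      push_neg at h
      have : pZ z ≤ 0 := by rw [hpZ'' z]; exact Finset.sum_nonpos fun x _ => h x
      linarith
    obtain ⟨x1, hx1⟩ := this
    have hpX1 : 0 < pX x1 := lt_of_lt_of_le hx1 (hXZleX x1 z)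
    have hx1mem : x1 ∈ sX := (hsX x1).2 hpX1
    have h1 : pXZ x1 z / (pX x1 * pZ z) ≤ _ :=
      Finset.le_sup' (fun x => pXZ x z / (pX x * pZ z)) hx1mem
    have : 0 < pXZ x1 z / (pX x1 * pZ z) := by positivity
    linarith
  have hlog : Real.log (sX.sup' hneX fun x => pXZ x z / (pX x * pZ z)) ≤ Real.log S :=
    Real.log_le_log hapos hale
  obtain ⟨ym, hym, hymeq⟩ := Finset.exists_mem_eq_sup' hneY
    (fun y => sX.sup' hneX fun x => pXY x y / (pX x * pY y))
  refine hlog.trans ?_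
  calc Real.log S = Real.log (sX.sup' hneX fun x => pXY x ym / (pX x * pY ym)) := by
        rw [hS, hymeq]
  _ ≤ _ := Finset.le_sup' (fun y => Real.log (sX.sup' hneX fun x => pXY x y / (pX x * pY y))) hym
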